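/- Let p, q be primes with p ≡ 1 (mod q) and G = ⟨s, t | t^p = s^q = 1, s⁻¹ t s = t^k⟩ where k has order q mod p, and T = ⟨t⟩. Then for every g ∉ T, the conjugacy class of g in G is the coset gT. -/

import Mathlib

open scoped Pointwise

/-- Relations for the presentation `⟨s, t | t^p = s^q = 1, s⁻¹ t s = t^k⟩`,
with `s = of 0` and `t = of 1`. -/
def pqRels (p q k : ℕ) : Set (FreeGroup (Fin 2)) :=
  {FreeGroup.of 1 ^ p, FreeGroup.of 0 ^ q,
    (FreeGroup.of 0)⁻¹ * FreeGroup.of 1 * FreeGroup.of 0 * (FreeGroup.of 1 ^ k)⁻¹}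

section GroupHelpers

variable {G : Type*} [Group G] {s t : G} {p q k : ℕ}

/-- If `t ^ p = 1` then powers of `t` only depend on the exponent mod `p`. -/
lemma aux_tpow_congr (ht : t ^ p = 1) {a b : ℤ} (h : (a : ZMod p) = (b : ZMod p)) :
    t ^ a = t ^ b := by
  obtain ⟨n, hn⟩ : (p : ℤ) ∣ b - a := ((ZMod.intCast_eq_intCast_iff _ _ _).mp h).dvd
  have hb : b = a + (p : ℤ) * n := by linarith
  rw [hb, zpow_add, zpow_mul, zpow_natCast, ht, one_zpow, mul_one]

lemma aux_conjL (hst : s⁻¹ * t * s = t ^ k) (j : ℕ) (a : ℤ) :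
    (s ^ j)⁻¹ * t ^ a * s ^ j = t ^ (a * (k ^ j : ℕ)) := by
  induction j generalizing a with
  | zero => simp
  | succ n ih =>
    have h1 : (s ^ (n + 1))⁻¹ * t ^ a * s ^ (n + 1)
        = s⁻¹ * ((s ^ n)⁻¹ * t ^ a * s ^ n) * s := by
      rw [pow_succ, mul_inv_rev]; group
    rw [h1, ih a]
    have h2 : s⁻¹ * t ^ (a * (k ^ n : ℕ)) * s = (s⁻¹ * t * s) ^ (a * (k ^ n : ℕ)) := by
      have := conj_zpow (i := a * (k ^ n : ℕ)) (a := s⁻¹) (b := t)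
      simpa using this.symm
    rw [h2, hst]
    rw [show (t ^ k : G) = t ^ (k : ℤ) from (zpow_natCast t k).symm, ← zpow_mul]
    congr 1
    push_cast
    ring

lemma aux_pow_inv (hs : s ^ q = 1) (hq1 : 1 ≤ q) (j : ℕ) :
    (s ^ j)⁻¹ = s ^ ((q - 1) * j) := by
  apply inv_eq_of_mul_eq_one_left
  rw [← pow_add]
  have : (q - 1) * j + j = q * j := by
    have : q - 1 + 1 = q := Nat.sub_add_cancel hq1
    nlinarith [Nat.sub_add_cancel hq1]
  rw [this, pow_mul, hs, one_pow]

lemma aux_conjR (hs : s ^ q = 1) (hq1 : 1 ≤ q) (hst : s⁻¹ * t * s = t ^ k) (j : ℕ) (a : ℤ) :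
    s ^ j * t ^ a * (s ^ j)⁻¹ = t ^ (a * (k ^ ((q - 1) * j) : ℕ)) := by
  have h1 : s ^ j = (s ^ ((q - 1) * j))⁻¹ := by
    rw [← aux_pow_inv hs hq1, inv_inv]
  rw [aux_pow_inv hs hq1, h1, aux_conjL hst]

end GroupHelpers

section PQ
variable {p q k : ℕ}
lemma pq_mk_eq_one {r : FreeGroup (Fin 2)} (h : r ∈ pqRels p q k) :
    PresentedGroup.mk (pqRels p q k) r = 1 :=
  (QuotientGroup.eq_one_iff r).mpr (Subgroup.subset_normalClosure h)

lemma pq_t_pow : (PresentedGroup.of 1 : PresentedGroup (pqRels p q k)) ^ p = 1 := by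
  have h := pq_mk_eq_one (p := p) (q := q) (k := k)
    (show FreeGroup.of 1 ^ p ∈ pqRels p q k by simp [pqRels])
  rwa [map_pow] at h

lemma pq_s_pow : (PresentedGroup.of 0 : PresentedGroup (pqRels p q k)) ^ q = 1 := by
  have h := pq_mk_eq_one (p := p) (q := q) (k := k)
    (show FreeGroup.of 0 ^ q ∈ pqRels p q k by simp [pqRels])
  rwa [map_pow] at h

lemma pq_conj : (PresentedGroup.of 0 : PresentedGroup (pqRels p q k))⁻¹ *
    PresentedGroup.of 1 * PresentedGroup.of 0 = PresentedGroup.of 1 ^ k := by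
  have h := pq_mk_eq_one (p := p) (q := q) (k := k)
    (show (FreeGroup.of 0)⁻¹ * FreeGroup.of 1 * FreeGroup.of 0 * (FreeGroup.of 1 ^ k)⁻¹
      ∈ pqRels p q k by simp [pqRels])
  rw [map_mul, map_mul, map_mul, map_inv, map_inv, map_pow, mul_inv_eq_one] at h
  exact h

/-- Normal form: every element is `t ^ i * s ^ j`. -/
lemma pq_nf (hq1 : 1 ≤ q) (g : PresentedGroup (pqRels p q k)) :
    ∃ (i : ℤ) (j : ℕ), g = PresentedGroup.of 1 ^ i * PresentedGroup.of 0 ^ j := by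
  set t : PresentedGroup (pqRels p q k) := PresentedGroup.of 1 with htdef
  set s : PresentedGroup (pqRels p q k) := PresentedGroup.of 0 with hsdef
  have hs : s ^ q = 1 := pq_s_pow
  have hst : s⁻¹ * t * s = t ^ k := pq_conj
  let H : Subgroup (PresentedGroup (pqRels p q k)) :=
    { carrier := {g | ∃ (i : ℤ) (j : ℕ), g = t ^ i * s ^ j}
      one_mem' := ⟨0, 0, by simp⟩
      mul_mem' := by
        rintro x y ⟨i, j, rfl⟩ ⟨i', j', rfl⟩
        refine ⟨i + i' * (k ^ ((q - 1) * j) : ℕ), j + j', ?_⟩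
        have key := aux_conjR hs hq1 hst j i'
        calc t ^ i * s ^ j * (t ^ i' * s ^ j')
            = t ^ i * (s ^ j * t ^ i' * (s ^ j)⁻¹) * (s ^ j * s ^ j') := by group
          _ = t ^ i * t ^ (i' * (k ^ ((q - 1) * j) : ℕ)) * s ^ (j + j') := by
              rw [key, pow_add]
          _ = t ^ (i + i' * (k ^ ((q - 1) * j) : ℕ)) * s ^ (j + j') := by
              rw [← zpow_add]
      inv_mem' := by
        rintro x ⟨i, j, rfl⟩
        refine ⟨-(i * (k ^ j : ℕ)), (q - 1) * j, ?_⟩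
        have key := aux_conjL hst j (-i)
        calc (t ^ i * s ^ j)⁻¹
            = (s ^ j)⁻¹ * t ^ (-i) * s ^ j * (s ^ j)⁻¹ := by group
          _ = t ^ (-i * (k ^ j : ℕ)) * (s ^ j)⁻¹ := by rw [key]
          _ = t ^ (-(i * (k ^ j : ℕ))) * s ^ ((q - 1) * j) := by
              rw [aux_pow_inv hs hq1, neg_mul] }
  have := PresentedGroup.generated_by (pqRels p q k) H
    (by
      intro j
      fin_cases j
      · exact ⟨0, 1, by simp [hsdef]⟩
      · exact ⟨1, 0, by simp [htdef]⟩) g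
  exact this

end PQ

/-- For primes `p ≡ 1 (mod q)` and `k` of order `q` mod `p`, in
`G = C_p ⋊ C_q = ⟨s, t | t^p = s^q = 1, s⁻¹ t s = t^k⟩` with `T = ⟨t⟩`, the
conjugacy class of any `g ∉ T` is the coset `gT`. -/
theorem conjClass_eq_coset {p q k : ℕ} (hp : p.Prime) (hq : q.Prime)
    (hpq : p % q = 1) (hk : orderOf (k : ZMod p) = q) :
    letI G := PresentedGroup (pqRels p q k)
    letI t : G := PresentedGroup.of 1
    ∀ g : G, g ∉ Subgroup.zpowers t →
      {y | IsConj g y} = g • ((Subgroup.zpowers t : Subgroup G) : Set G) := by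
  intro g hg
  haveI : Fact p.Prime := ⟨hp⟩
  set t : PresentedGroup (pqRels p q k) := PresentedGroup.of 1 with htdef
  set s : PresentedGroup (pqRels p q k) := PresentedGroup.of 0 with hsdef
  have hq1 : 1 ≤ q := hq.one_lt.le
  have ht : t ^ p = 1 := pq_t_pow
  have hs : s ^ q = 1 := pq_s_pow
  have hst : s⁻¹ * t * s = t ^ k := pq_conj
  obtain ⟨i, j, rfl⟩ := pq_nf (p := p) (k := k) hq1 g
  simp only [← htdef, ← hsdef] at hg ⊢
  have hqj : ¬ (q ∣ j) := by
    rintro ⟨d, rfl⟩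
    apply hg
    rw [pow_mul, hs, one_pow, mul_one]
    exact Subgroup.zpow_mem_zpowers t i
  have hkj : ((k : ZMod p)) ^ j ≠ 1 := fun h => hqj (hk ▸ orderOf_dvd_of_pow_eq_one h)
  set c : ZMod p := (k : ZMod p) ^ j - 1 with hc
  have hc0 : c ≠ 0 := sub_ne_zero.mpr hkj
  ext y
  simp only [Set.mem_setOf_eq]
  constructor
  · intro hy
    obtain ⟨x, hx⟩ := isConj_iff.mp hy
    obtain ⟨b, cx, rfl⟩ := pq_nf (p := p) (k := k) hq1 x
    simp only [← htdef, ← hsdef] at hx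
    set N : ℤ := b + i * (k ^ ((q - 1) * cx) : ℕ) + (-b) * (k ^ ((q - 1) * j) : ℕ) with hN
    have hBD : s ^ cx * s ^ j * (s ^ cx)⁻¹ = s ^ j := by
      rw [pow_mul_comm, mul_assoc]; simp
    have hxg : t ^ b * s ^ cx * (t ^ i * s ^ j) * (t ^ b * s ^ cx)⁻¹ = t ^ N * s ^ j := by
      have key : ∀ a B C D : PresentedGroup (pqRels p q k),
          (a * B) * (C * D) * (a * B)⁻¹
            = a * (B * C * B⁻¹) * ((B * D * B⁻¹) * a⁻¹ * (B * D * B⁻¹)⁻¹) * (B * D * B⁻¹) := by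
        intros; group
      rw [key (t ^ b) (s ^ cx) (t ^ i) (s ^ j), hBD, aux_conjR hs hq1 hst cx i,
        show (t ^ b)⁻¹ = t ^ (-b) from (zpow_neg t b).symm,
        aux_conjR hs hq1 hst j (-b), ← zpow_add, ← zpow_add]
    have hy2 : (t ^ i * s ^ j)⁻¹ * y = t ^ ((N - i) * (k ^ j : ℕ)) := by
      have e : ∀ A B C : PresentedGroup (pqRels p q k),
          (A * B)⁻¹ * (C * B) = B⁻¹ * (A⁻¹ * C) * B := by intros; group
      rw [← hx, hxg, e, show (t ^ i)⁻¹ * t ^ N = t ^ (N - i) by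
        rw [← zpow_neg, ← zpow_add]; congr 1; ring]
      exact aux_conjL hst j (N - i)
    rw [Set.mem_smul_set_iff_inv_smul_mem, smul_eq_mul, hy2, SetLike.mem_coe]
    exact Subgroup.zpow_mem_zpowers t _
  · intro hy
    rw [Set.mem_smul_set_iff_inv_smul_mem, smul_eq_mul, SetLike.mem_coe] at hy
    obtain ⟨m, hm⟩ := Subgroup.mem_zpowers_iff.mp hy
    set a : ℕ := ((m : ZMod p) * c⁻¹).val with ha
    rw [isConj_iff]
    refine ⟨t ^ (a : ℤ), ?_⟩
    have e2 : (t ^ i * s ^ j)⁻¹ * t ^ (a : ℤ) * (t ^ i * s ^ j) = t ^ ((a : ℤ) * (k ^ j : ℕ)) := by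
      have e : ∀ A B C : PresentedGroup (pqRels p q k),
          (A * B)⁻¹ * C * (A * B) = B⁻¹ * (A⁻¹ * C * A) * B := by
        intros; group
      rw [e, show (t ^ i)⁻¹ * t ^ (a : ℤ) * t ^ i = t ^ (a : ℤ) by
        rw [← zpow_neg, ← zpow_add, ← zpow_add]; congr 1; ring]
      exact aux_conjL hst j _
    have hmod : t ^ ((a : ℤ) * (k ^ j : ℕ) + (-(a : ℤ))) = t ^ m := by
      apply aux_tpow_congr ht
      have hav : ((a : ℕ) : ZMod p) = (m : ZMod p) * c⁻¹ := ZMod.natCast_rightInverse _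
      push_cast
      rw [hav, hc]
      field_simp
      ring
    calc t ^ (a : ℤ) * (t ^ i * s ^ j) * (t ^ (a : ℤ))⁻¹
        = (t ^ i * s ^ j) * ((t ^ i * s ^ j)⁻¹ * t ^ (a : ℤ) * (t ^ i * s ^ j))
            * (t ^ (a : ℤ))⁻¹ := by group
      _ = (t ^ i * s ^ j) * (t ^ ((a : ℤ) * (k ^ j : ℕ)) * t ^ (-(a : ℤ))) := by
          rw [e2, ← zpow_neg, mul_assoc]
      _ = (t ^ i * s ^ j) * t ^ ((a : ℤ) * (k ^ j : ℕ) + (-(a : ℤ))) := by rw [← zpow_add]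
      _ = (t ^ i * s ^ j) * t ^ m := by rw [hmod]
      _ = y := by rw [hm, mul_inv_cancel_left]
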